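/- The geodesic distance on any projective space P^n_𝔽 (𝔽 = ℝ, ℂ, ℍ; n ≥ 2) is not of negative type, since P^n_𝔽 contains RP² as a geodesic (isometrically embedded, distance-preserving) subspace and the geodesic distance on RP² is not of negative type. -/

import Mathlib

open Finset

/-- Geodesic distance on the projective space `P^n_𝔽`, in terms of nonzero
representative vectors: `cos d(x,y) = |(x,y)| / ((x,x)(y,y))^{1/2}` where
`(x,y) = ∑ x̄ⁱ yⁱ` is the standard `𝔽`-hermitian inner product (so
`(x,x) = ∑ ‖xⁱ‖²`). -/
noncomputable def projDist {𝔽 : Type*} [NormedDivisionRing 𝔽] [StarRing 𝔽]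
    {n : ℕ} (x y : Fin (n + 1) → 𝔽) : ℝ :=
  Real.arccos (‖∑ i, star (x i) * y i‖ /
    Real.sqrt ((∑ i, ‖x i‖ ^ 2) * (∑ i, ‖y i‖ ^ 2)))

/-- The geodesic distance on `P^n_𝔽` fails to be of negative type. -/
def ProjDistNotNegType (𝔽 : Type*) [NormedDivisionRing 𝔽] [StarRing 𝔽]
    (n : ℕ) : Prop :=
  ∃ (m : ℕ) (x : Fin m → (Fin (n + 1) → 𝔽)) (t : Fin m → ℝ),
    (∀ i, x i ≠ 0) ∧ (∑ i, t i) = 0 ∧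
    0 < ∑ i, ∑ j, t i * t j * projDist (x i) (x j)

section Aux

open Real

noncomputable def pad {𝔽 : Type*} [NormedDivisionRing 𝔽] (f : ℝ →+* 𝔽) (n : ℕ)
    (u : Fin 3 → ℝ) : Fin (n + 1) → 𝔽 :=
  fun i => if h : (i : ℕ) < 3 then f (u ⟨(i : ℕ), h⟩) else 0

lemma pad_sum {𝔽 : Type*} [NormedDivisionRing 𝔽] (f : ℝ →+* 𝔽) {n : ℕ}
    (hn : 2 ≤ n) {M : Type*} [AddCommMonoid M] (g : 𝔽 → 𝔽 → M) (hg : g 0 0 = 0)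
    (u v : Fin 3 → ℝ) :
    ∑ i : Fin (n + 1), g (pad f n u i) (pad f n v i)
      = ∑ k : Fin 3, g (f (u k)) (f (v k)) := by
  set H : ℕ → M := fun k => if h : k < 3 then g (f (u ⟨k, h⟩)) (f (v ⟨k, h⟩)) else 0 with hH
  have step : ∀ i : Fin (n + 1), g (pad f n u i) (pad f n v i) = H (i : ℕ) := by
    intro i
    by_cases h : (i : ℕ) < 3 <;> simp [pad, hH, h, hg]
  calc ∑ i : Fin (n + 1), g (pad f n u i) (pad f n v i)
      = ∑ i : Fin (n + 1), H (i : ℕ) := by simp [step]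
    _ = ∑ k ∈ Finset.range (n + 1), H k := Fin.sum_univ_eq_sum_range H (n + 1)
    _ = ∑ k ∈ Finset.range 3, H k := by
        refine (Finset.sum_subset (Finset.range_subset_range.2 (by omega)) ?_).symm
        intro k hk hk3
        simp only [Finset.mem_range] at hk3
        simp [hH, hk3]
    _ = ∑ k : Fin 3, H (k : ℕ) := (Fin.sum_univ_eq_sum_range H 3).symm
    _ = ∑ k : Fin 3, g (f (u k)) (f (v k)) := by
        apply Finset.sum_congr rfl
        intro k _
        simp [hH, k.isLt]

lemma projDist_pad {𝔽 : Type*} [NormedDivisionRing 𝔽] [StarRing 𝔽] (f : ℝ →+* 𝔽)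
    (hstar : ∀ r, star (f r) = f r) (hnorm : ∀ r, ‖f r‖ = |r|) {n : ℕ} (hn : 2 ≤ n)
    (u v : Fin 3 → ℝ) :
    projDist (pad f n u) (pad f n v)
      = Real.arccos (|∑ k : Fin 3, u k * v k| /
          Real.sqrt ((∑ k : Fin 3, (u k) ^ 2) * (∑ k : Fin 3, (v k) ^ 2))) := by
  have h1 : ∑ i : Fin (n + 1), star (pad f n u i) * pad f n v i
      = f (∑ k : Fin 3, u k * v k) := by
    rw [pad_sum f hn (fun a b => star a * b) (by simp) u v, map_sum]
    exact Finset.sum_congr rfl fun k _ => by rw [hstar, ← map_mul]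
  have h2 : ∑ i : Fin (n + 1), ‖pad f n u i‖ ^ 2 = ∑ k : Fin 3, (u k) ^ 2 := by
    rw [pad_sum f hn (fun a b => ‖a‖ ^ 2) (by simp) u v]
    exact Finset.sum_congr rfl fun k _ => by rw [hnorm, sq_abs]
  have h3 : ∑ i : Fin (n + 1), ‖pad f n v i‖ ^ 2 = ∑ k : Fin 3, (v k) ^ 2 := by
    rw [pad_sum f hn (fun a b => ‖b‖ ^ 2) (by simp) u v]
    exact Finset.sum_congr rfl fun k _ => by rw [hnorm, sq_abs]
  rw [projDist, h1, h2, h3, hnorm]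


open Matrix in
@[simp] lemma cons_val_five {α : Type*} {m : ℕ} (x : α)
    (u : Fin (m + 5) → α) : vecCons x u 5 = vecHead (vecTail (vecTail (vecTail (vecTail u)))) := rfl

open Matrix in
@[simp] lemma cons_val_six {α : Type*} {m : ℕ} (x : α)
    (u : Fin (m + 6) → α) : vecCons x u 6 = vecHead (vecTail (vecTail (vecTail (vecTail (vecTail u))))) := rfl

open Matrix in
@[simp] lemma cons_val_seven {α : Type*} {m : ℕ} (x : α)
    (u : Fin (m + 7) → α) : vecCons x u 7 = vecHead (vecTail (vecTail (vecTail (vecTail (vecTail (vecTail u)))))) := rfl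

open Matrix in
@[simp] lemma cons_val_eight {α : Type*} {m : ℕ} (x : α)
    (u : Fin (m + 8) → α) : vecCons x u 8 = vecHead (vecTail (vecTail (vecTail (vecTail (vecTail (vecTail (vecTail u))))))) := rfl

noncomputable def Vpts : Fin 9 → (Fin 3 → ℝ) :=
  ![![Real.sqrt 2, 0, 0], ![0, Real.sqrt 2, 0], ![0, 0, Real.sqrt 2],
    ![1, 1, 0], ![1, -1, 0], ![1, 0, 1], ![1, 0, -1], ![0, 1, 1], ![0, 1, -1]]

noncomputable def DMat : Fin 9 → Fin 9 → ℝ :=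
  ![![0, 1/2, 1/2, 1/4, 1/4, 1/4, 1/4, 1/2, 1/2],
    ![1/2, 0, 1/2, 1/4, 1/4, 1/2, 1/2, 1/4, 1/4],
    ![1/2, 1/2, 0, 1/2, 1/2, 1/4, 1/4, 1/4, 1/4],
    ![1/4, 1/4, 1/2, 0, 1/2, 1/3, 1/3, 1/3, 1/3],
    ![1/4, 1/4, 1/2, 1/2, 0, 1/3, 1/3, 1/3, 1/3],
    ![1/4, 1/2, 1/4, 1/3, 1/3, 0, 1/2, 1/3, 1/3],
    ![1/4, 1/2, 1/4, 1/3, 1/3, 1/2, 0, 1/3, 1/3],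
    ![1/2, 1/4, 1/4, 1/3, 1/3, 1/3, 1/3, 0, 1/2],
    ![1/2, 1/4, 1/4, 1/3, 1/3, 1/3, 1/3, 1/2, 0]]

def Twts : Fin 9 → ℝ := ![-8, -8, 16, 18, 18, -9, -9, -9, -9]

lemma sqrt_four' : Real.sqrt 4 = 2 := by
  rw [show (4:ℝ) = 2 ^ 2 by norm_num, Real.sqrt_sq (by norm_num)]

lemma arccos_half' : Real.arccos (1 / 2) = π / 3 := by
  rw [← Real.cos_pi_div_three, Real.arccos_cos] <;> nlinarith [pi_pos]

lemma arccos_sqrt2' : Real.arccos (Real.sqrt 2 / 2) = π / 4 := by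
  rw [← Real.cos_pi_div_four, Real.arccos_cos] <;> nlinarith [pi_pos]

set_option maxHeartbeats 2000000 in
lemma dist_eval {𝔽 : Type*} [NormedDivisionRing 𝔽] [StarRing 𝔽] (f : ℝ →+* 𝔽)
    (hstar : ∀ r, star (f r) = f r) (hnorm : ∀ r, ‖f r‖ = |r|) {n : ℕ} (hn : 2 ≤ n)
    (i j : Fin 9) :
    projDist (pad f n (Vpts i)) (pad f n (Vpts j)) = DMat i j * π := by
  rw [projDist_pad f hstar hnorm hn]
  have h2 : Real.sqrt 2 * Real.sqrt 2 = 2 := Real.mul_self_sqrt (by norm_num)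
  have hs2 : Real.sqrt 2 ^ 2 = 2 := Real.sq_sqrt (by norm_num)
  have habs : |Real.sqrt 2| = Real.sqrt 2 := abs_of_nonneg (Real.sqrt_nonneg 2)
  fin_cases i <;> fin_cases j <;>
    simp [Vpts, DMat, Fin.sum_univ_three, h2, hs2, habs, Matrix.vecHead, Matrix.vecTail] <;>
    norm_num [sqrt_four', arccos_half', arccos_sqrt2', Real.arccos_one, Real.arccos_zero] <;> ring

def Twit : Fin 9 → Fin 3 := ![0, 1, 2, 0, 0, 0, 0, 1, 1]

lemma Vpts_wit (i : Fin 9) : Vpts i (Twit i) ≠ 0 := by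
  fin_cases i <;>
    norm_num [Vpts, Twit, Real.sqrt_eq_zero, Matrix.vecHead, Matrix.vecTail, Matrix.cons_val_two]

lemma notNegType_of_hom {𝔽 : Type*} [NormedDivisionRing 𝔽] [StarRing 𝔽] {n : ℕ}
    (hn : 2 ≤ n) (f : ℝ →+* 𝔽) (hstar : ∀ r, star (f r) = f r)
    (hnorm : ∀ r, ‖f r‖ = |r|) : ProjDistNotNegType 𝔽 n := by
  refine ⟨9, fun i => pad f n (Vpts i), Twts, ?_, ?_, ?_⟩
  · intro i h
    apply Vpts_wit i
    have h0 := congrFun h ⟨(Twit i : ℕ), by have := (Twit i).isLt; omega⟩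
    simp only [pad, Pi.zero_apply, (Twit i).isLt, dif_pos, Fin.eta] at h0
    exact f.injective (h0.trans (map_zero f).symm)
  · norm_num [Twts, Fin.sum_univ_succ, Matrix.vecHead, Matrix.vecTail]
  · have key : ∑ i : Fin 9, ∑ j : Fin 9,
        Twts i * Twts j * projDist (pad f n (Vpts i)) (pad f n (Vpts j)) = 78 * π := by
      simp_rw [dist_eval f hstar hnorm hn]
      norm_num [Twts, DMat, Fin.sum_univ_succ, Matrix.vecHead, Matrix.vecTail]
      ring
    rw [key]
    positivity

end Aux

/-- The geodesic distance on any projective space `P^n_𝔽` (`𝔽 = ℝ, ℂ, ℍ`;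
`n ≥ 2`) is not of negative type (each such projective space contains `RP²` as a
geodesic subspace, and the geodesic distance on `RP²` is not of negative type). -/
theorem projective_space_dist_not_negative_type (n : ℕ) (hn : 2 ≤ n) :
    ProjDistNotNegType ℝ n ∧ ProjDistNotNegType ℂ n ∧
      ProjDistNotNegType (Quaternion ℝ) n := by
  refine ⟨?_, ?_, ?_⟩
  · exact notNegType_of_hom hn (RingHom.id ℝ) (fun r => star_trivial r)
      (fun r => Real.norm_eq_abs r)
  · exact notNegType_of_hom hn Complex.ofRealHom
      (fun r => by simp [Complex.star_def, Complex.conj_ofReal])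
      (fun r => by simp [Real.norm_eq_abs])
  · exact notNegType_of_hom hn (algebraMap ℝ (Quaternion ℝ))
      (fun r => by simp [Quaternion.algebraMap_def, Quaternion.star_coe])
      (fun r => by simp [Quaternion.algebraMap_def, Quaternion.norm_coe, Real.norm_eq_abs])
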